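/- Let S = (N, D) be a finite linear space, i.e., N is a finite set of points and D is a collection of subsets of N (called lines) such that every line contains at least two points and any two distinct points of N lie on exactly one common line. Let v = |N| and b = |D|, and suppose b > 1 and b = v. Then exactly one of the following holds: either there is a line containing exactly v − 1 points and every other line contains exactly 2 points, or there exists an integer k ≥ 2 such that every line contains exactly k + 1 points and every point lies on exactly k + 1 lines. -/
import Mathlib


/-- **Equality case of the de Bruijn–Erdős theorem.** In a finite linear space
`(N, D)` with `b = |D| > 1` and `b = v = |N|`, exactly one of the following
holds: either some line has exactly `v - 1` points and every other line has
exactly `2` points (a near-pencil), or there is an integer `k ≥ 2` such that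
every line has exactly `k + 1` points and every point lies on exactly `k + 1`
lines (a projective plane of order `k`). -/
theorem deBruijn_erdos_equality_case {α : Type*} [DecidableEq α]
    (N : Finset α) (D : Finset (Finset α))
    (hsub : ∀ ℓ ∈ D, ℓ ⊆ N)
    (hcard : ∀ ℓ ∈ D, 2 ≤ ℓ.card)
    (hunique : ∀ p ∈ N, ∀ q ∈ N, p ≠ q → ∃! ℓ, ℓ ∈ D ∧ p ∈ ℓ ∧ q ∈ ℓ)
    (hb : 1 < D.card) (heq : D.card = N.card) :
    Xor'
      (∃ ℓ ∈ D, ℓ.card = N.card - 1 ∧ ∀ ℓ' ∈ D, ℓ' ≠ ℓ → ℓ'.card = 2)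
      (∃ k : ℕ, 2 ≤ k ∧ (∀ ℓ ∈ D, ℓ.card = k + 1) ∧
        ∀ p ∈ N, (D.filter (fun ℓ => p ∈ ℓ)).card = k + 1) := by
  classical
  have hDne : D.Nonempty := Finset.card_pos.mp (by omega)
  have huniq2 : ∀ m ∈ D, ∀ m' ∈ D, ∀ a b : α, a ∈ m → b ∈ m → a ∈ m' → b ∈ m' →
      a ≠ b → m = m' := by
    intro m hm m' hm' a b ham hbm ham' hbm' hab
    obtain ⟨ℓ, -, hu⟩ := hunique a (hsub m hm ham) b (hsub m hm hbm) hab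
    rw [hu m ⟨hm, ham, hbm⟩, hu m' ⟨hm', ham', hbm'⟩]
  have hexline : ∀ p ∈ N, ∃ ℓ ∈ D, p ∉ ℓ := by
    intro p hp
    by_contra hcon
    push_neg at hcon
    have hmap : ∀ ℓ : Finset α, ∃ q, ℓ ∈ D → q ∈ ℓ.erase p := by
      intro ℓ
      by_cases hℓ : ℓ ∈ D
      · have h1 : 1 ≤ (ℓ.erase p).card := by
          rw [Finset.card_erase_of_mem (hcon ℓ hℓ)]
          have := hcard ℓ hℓ; omega
        obtain ⟨q, hq⟩ := Finset.card_pos.mp h1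
        exact ⟨q, fun _ => hq⟩
      · exact ⟨p, fun h => absurd h hℓ⟩
    choose f hf using hmap
    have hle : D.card ≤ (N.erase p).card := by
      apply Finset.card_le_card_of_injOn f
      · intro ℓ hℓ
        have := hf ℓ hℓ
        exact Finset.mem_erase.mpr ⟨(Finset.mem_erase.mp this).1,
          hsub ℓ hℓ (Finset.mem_erase.mp this).2⟩
      · intro ℓ₁ h₁ ℓ₂ h₂ hfe
        have e1 := Finset.mem_erase.mp (hf ℓ₁ h₁)
        have e2 := Finset.mem_erase.mp (hf ℓ₂ h₂)
        rw [hfe] at e1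
        exact huniq2 ℓ₁ h₁ ℓ₂ h₂ p (f ℓ₂) (hcon ℓ₁ h₁) e1.2 (hcon ℓ₂ h₂) e2.2
          (fun h => e1.1 h.symm)
    rw [Finset.card_erase_of_mem hp] at hle
    have : 1 ≤ N.card := by omega
    omega
  -- key facts via Configuration machinery
  obtain ⟨key, meet⟩ :
      (∀ p ∈ N, ∀ ℓ ∈ D, p ∉ ℓ → (D.filter fun m => p ∈ m).card = ℓ.card) ∧
      (∀ m ∈ D, ∀ m' ∈ D, m ≠ m' → ∃ x, x ∈ m ∧ x ∈ m') := by
    letI : Membership {x // x ∈ N} {m // m ∈ D} := ⟨fun l q => q.1 ∈ l.1⟩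
    haveI hnd : Configuration.Nondegenerate {x // x ∈ N} {m // m ∈ D} := {
      exists_point := by
        rintro ⟨m, hm⟩
        obtain ⟨m', hm', hne⟩ := Finset.exists_mem_ne hb m
        obtain ⟨a, ha, b, hb', hab⟩ := Finset.one_lt_card.mp (hcard m' hm')
        by_cases ham : a ∈ m
        · by_cases hbm : b ∈ m
          · exact absurd (huniq2 m' hm' m hm a b ha hb' ham hbm hab) hne
          · exact ⟨⟨b, hsub m' hm' hb'⟩, hbm⟩
        · exact ⟨⟨a, hsub m' hm' ha⟩, ham⟩
      exists_line := by
        rintro ⟨q, hq⟩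
        obtain ⟨m, hm, hqm⟩ := hexline q hq
        exact ⟨⟨m, hm⟩, hqm⟩
      eq_or_eq := by
        rintro ⟨a, ha⟩ ⟨b, hb'⟩ ⟨m, hm⟩ ⟨m', hm'⟩ h1 h2 h3 h4
        by_cases hab : a = b
        · exact Or.inl (Subtype.ext hab)
        · exact Or.inr (Subtype.ext (huniq2 m hm m' hm' a b h1 h2 h3 h4 hab)) }
    haveI hl : Configuration.HasLines {x // x ∈ N} {m // m ∈ D} := {
      mkLine := fun {q r} h =>
        ⟨(hunique q.1 q.2 r.1 r.2 fun e => h (Subtype.ext e)).exists.choose,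
         (hunique q.1 q.2 r.1 r.2 fun e => h (Subtype.ext e)).exists.choose_spec.1⟩
      mkLine_ax := fun {q r} h =>
        ⟨(hunique q.1 q.2 r.1 r.2 fun e => h (Subtype.ext e)).exists.choose_spec.2.1,
         (hunique q.1 q.2 r.1 r.2 fun e => h (Subtype.ext e)).exists.choose_spec.2.2⟩ }
    have hcards : Fintype.card {x // x ∈ N} = Fintype.card {m // m ∈ D} := by
      rw [Fintype.card_coe, Fintype.card_coe, heq]
    constructor
    · intro p hp ℓ hℓ hpl
      have h1 := Configuration.HasLines.lineCount_eq_pointCount hcards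
        (p := (⟨p, hp⟩ : {x // x ∈ N})) (l := (⟨ℓ, hℓ⟩ : {m // m ∈ D})) hpl
      have h2 : Configuration.lineCount {m // m ∈ D} (⟨p, hp⟩ : {x // x ∈ N})
          = (D.filter fun m => p ∈ m).card := by
        rw [Configuration.lineCount,
          Nat.card_congr (⟨fun l => ⟨l.1.1, Finset.mem_filter.mpr ⟨l.1.2, l.2⟩⟩,
            fun m => ⟨⟨m.1, (Finset.mem_filter.mp m.2).1⟩, (Finset.mem_filter.mp m.2).2⟩,
            fun l => rfl, fun m => rfl⟩ :
            {l : {m // m ∈ D} // (⟨p, hp⟩ : {x // x ∈ N}) ∈ l}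
              ≃ {m // m ∈ D.filter fun m => p ∈ m}),
          Nat.card_eq_finsetCard]
      have h3 : Configuration.pointCount {x // x ∈ N} (⟨ℓ, hℓ⟩ : {m // m ∈ D})
          = ℓ.card := by
        rw [Configuration.pointCount,
          Nat.card_congr (⟨fun q => ⟨q.1.1, q.2⟩,
            fun x => ⟨⟨x.1, hsub ℓ hℓ x.2⟩, x.2⟩, fun q => rfl, fun x => rfl⟩ :
            {q : {x // x ∈ N} // q ∈ (⟨ℓ, hℓ⟩ : {m // m ∈ D})} ≃ {x // x ∈ ℓ}),
          Nat.card_eq_finsetCard]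
      rw [← h2, ← h3, h1]
    · intro m hm m' hm' hne
      haveI hp' := Configuration.HasLines.hasPoints hcards
      obtain ⟨x, hx⟩ := (Configuration.HasPoints.existsUnique_point {x // x ∈ N}
        {m // m ∈ D} ⟨m, hm⟩ ⟨m', hm'⟩ (fun e => hne (congrArg Subtype.val e))).exists
      exact ⟨x.1, hx.1, hx.2⟩
  by_cases hA : ∀ ℓ ∈ D, ∀ ℓ' ∈ D, ℓ.card = ℓ'.card
  · obtain ⟨ℓ₀, hℓ₀⟩ := hDne
    by_cases hk : ℓ₀.card = 2
    · -- all lines have 2 points; show N.card = 3 and near-pencil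
      left
      have hall2 : ∀ ℓ ∈ D, ℓ.card = 2 := fun ℓ hℓ => (hA ℓ hℓ ℓ₀ hℓ₀).trans hk
      have hNne : N.Nonempty := Finset.card_pos.mp (by omega)
      obtain ⟨p, hp⟩ := hNne
      obtain ⟨ℓa, hℓa, hpa⟩ := hexline p hp
      have hr2 : (D.filter fun m => p ∈ m).card = 2 :=
        (key p hp ℓa hℓa hpa).trans (hall2 ℓa hℓa)
      -- (N.erase p).card = 2
      have hmap : ∀ q : α, ∃ m, q ∈ N.erase p →
          m ∈ D ∧ p ∈ m ∧ q ∈ m := by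
        intro q
        by_cases hq : q ∈ N.erase p
        · obtain ⟨m, hm, -⟩ := hunique p hp q (Finset.mem_of_mem_erase hq)
            (fun e => (Finset.mem_erase.mp hq).1 e.symm)
          exact ⟨m, fun _ => hm⟩
        · exact ⟨∅, fun h => absurd h hq⟩
      choose ln hln using hmap
      have hle1 : (N.erase p).card ≤ (D.filter fun m => p ∈ m).card := by
        apply Finset.card_le_card_of_injOn ln
        · intro q hq
          obtain ⟨hm, hpm, -⟩ := hln q hq
          exact Finset.mem_filter.mpr ⟨hm, hpm⟩
        · intro q₁ h₁ q₂ h₂ he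
          obtain ⟨hm₁, hpm₁, hq₁⟩ := hln q₁ h₁
          obtain ⟨hm₂, hpm₂, hq₂⟩ := hln q₂ h₂
          rw [he] at hm₁ hpm₁ hq₁
          -- ln q₂ has card 2 and contains p, q₁, q₂ with q₁ ≠ p, q₂ ≠ p
          by_contra hne
          have h3 : 3 ≤ (ln q₂).card := by
            have : {p, q₁, q₂} ⊆ ln q₂ := by
              intro y hy
              rcases Finset.mem_insert.mp hy with h | hy'
              · exact h ▸ hpm₂
              · rcases Finset.mem_insert.mp hy' with h | h
                · exact h ▸ hq₁
                · exact (Finset.mem_singleton.mp h) ▸ hq₂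
            have hc3 : ({p, q₁, q₂} : Finset α).card = 3 := by
              rw [Finset.card_insert_of_notMem, Finset.card_insert_of_notMem,
                Finset.card_singleton]
              · simp only [Finset.mem_singleton]
                exact hne
              · simp only [Finset.mem_insert, Finset.mem_singleton]
                push_neg
                exact ⟨fun e => (Finset.mem_erase.mp h₁).1 e.symm,
                  fun e => (Finset.mem_erase.mp h₂).1 e.symm⟩
            calc 3 = ({p, q₁, q₂} : Finset α).card := hc3.symm
              _ ≤ (ln q₂).card := Finset.card_le_card this
          have := hall2 (ln q₂) hm₂
          omega
      have hle2 : (D.filter fun m => p ∈ m).card ≤ (N.erase p).card := by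
        have hmap2 : ∀ m : Finset α, ∃ q, m ∈ D.filter (fun m => p ∈ m) →
            q ∈ m.erase p := by
          intro m
          by_cases hm : m ∈ D.filter fun m => p ∈ m
          · obtain ⟨hmD, hpm⟩ := Finset.mem_filter.mp hm
            have h1 : 1 ≤ (m.erase p).card := by
              rw [Finset.card_erase_of_mem hpm]
              have := hcard m hmD; omega
            obtain ⟨q, hq⟩ := Finset.card_pos.mp h1
            exact ⟨q, fun _ => hq⟩
          · exact ⟨p, fun h => absurd h hm⟩
        choose f hf using hmap2
        apply Finset.card_le_card_of_injOn f
        · intro m hm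
          have h1 := Finset.mem_erase.mp (hf m hm)
          exact Finset.mem_erase.mpr ⟨h1.1,
            hsub m (Finset.mem_filter.mp hm).1 h1.2⟩
        · intro m₁ h₁ m₂ h₂ hfe
          obtain ⟨hm₁, hpm₁⟩ := Finset.mem_filter.mp h₁
          obtain ⟨hm₂, hpm₂⟩ := Finset.mem_filter.mp h₂
          have e1 := Finset.mem_erase.mp (hf m₁ h₁)
          have e2 := Finset.mem_erase.mp (hf m₂ h₂)
          rw [hfe] at e1
          exact huniq2 m₁ hm₁ m₂ hm₂ p (f m₂) hpm₁ e1.2 hpm₂ e2.2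
            (fun h => e1.1 h.symm)
      have hv3 : N.card = 3 := by
        have := Finset.card_erase_of_mem hp
        have h1 : 1 ≤ N.card := Finset.card_pos.mpr ⟨p, hp⟩
        omega
      refine ⟨⟨ℓ₀, hℓ₀, by omega, fun ℓ' hℓ' _ => hall2 ℓ' hℓ'⟩, ?_⟩
      rintro ⟨k, hk2, hksize, -⟩
      have := hksize ℓ₀ hℓ₀
      omega
    · -- projective plane case
      right
      have h3 : 3 ≤ ℓ₀.card := by have := hcard ℓ₀ hℓ₀; omega
      refine ⟨⟨ℓ₀.card - 1, by omega, fun ℓ hℓ => by have := hA ℓ hℓ ℓ₀ hℓ₀; omega,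
        ?_⟩, ?_⟩
      · intro p hp
        obtain ⟨ℓ, hℓ, hpl⟩ := hexline p hp
        have := key p hp ℓ hℓ hpl
        have := hA ℓ hℓ ℓ₀ hℓ₀
        omega
      · rintro ⟨ℓ, hℓ, hvm1, hrest⟩
        obtain ⟨ℓ', hℓ', hne⟩ := Finset.exists_mem_ne hb ℓ
        have h2 := hrest ℓ' hℓ' hne
        have := hA ℓ' hℓ' ℓ₀ hℓ₀
        omega
  · -- near-pencil case
    push_neg at hA
    obtain ⟨m₁, hm₁, m₂, hm₂, hnecard⟩ := hA
    have main : ∀ ℓ₁ ∈ D, ∀ ℓ₂ ∈ D, ℓ₂.card < ℓ₁.card →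
        ∃ ℓ ∈ D, ℓ.card = N.card - 1 ∧ ∀ ℓ' ∈ D, ℓ' ≠ ℓ → ℓ'.card = 2 := by
      intro ℓ₁ hℓ₁ ℓ₂ hℓ₂ hlt
      have hne : ℓ₁ ≠ ℓ₂ := fun e => by rw [e] at hlt; omega
      have hcover : ∀ q ∈ N, q ∈ ℓ₁ ∨ q ∈ ℓ₂ := by
        intro q hq
        by_contra h
        push_neg at h
        have k1 := key q hq ℓ₁ hℓ₁ h.1
        have k2 := key q hq ℓ₂ hℓ₂ h.2
        omega
      obtain ⟨x, hx₁, hx₂⟩ := meet ℓ₁ hℓ₁ ℓ₂ hℓ₂ hne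
      have hint : ℓ₁ ∩ ℓ₂ = {x} := by
        apply subset_antisymm
        · intro y hy
          obtain ⟨hy₁, hy₂⟩ := Finset.mem_inter.mp hy
          rw [Finset.mem_singleton]
          by_contra hyx
          exact hne (huniq2 ℓ₁ hℓ₁ ℓ₂ hℓ₂ y x hy₁ hx₁ hy₂ hx₂ hyx)
        · intro y hy
          rw [Finset.mem_singleton] at hy
          exact hy ▸ Finset.mem_inter.mpr ⟨hx₁, hx₂⟩
      have hnot21 : ∀ q ∈ ℓ₂, q ≠ x → q ∉ ℓ₁ := by
        intro q hq hqx hq1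
        have : q ∈ ℓ₁ ∩ ℓ₂ := Finset.mem_inter.mpr ⟨hq1, hq⟩
        rw [hint, Finset.mem_singleton] at this
        exact hqx this
      have hnot12 : ∀ q ∈ ℓ₁, q ≠ x → q ∉ ℓ₂ := by
        intro q hq hqx hq2
        have : q ∈ ℓ₁ ∩ ℓ₂ := Finset.mem_inter.mpr ⟨hq, hq2⟩
        rw [hint, Finset.mem_singleton] at this
        exact hqx this
      -- ℓ₂ has exactly 2 points
      have h22 : ℓ₂.card = 2 := by
        by_contra hc
        have h32 : 3 ≤ ℓ₂.card := by have := hcard ℓ₂ hℓ₂; omega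
        -- pick p ∈ ℓ₁ \ {x}
        obtain ⟨p, hpe⟩ : (ℓ₁.erase x).Nonempty := by
          apply Finset.card_pos.mp
          rw [Finset.card_erase_of_mem hx₁]
          omega
        obtain ⟨hpx, hp1⟩ := Finset.mem_erase.mp hpe
        have hp2 : p ∉ ℓ₂ := hnot12 p hp1 hpx
        -- pick two points q ≠ q' in ℓ₂ \ {x}
        obtain ⟨q, hqe, q', hq'e, hqq'⟩ : ∃ a ∈ ℓ₂.erase x, ∃ b ∈ ℓ₂.erase x, a ≠ b := by
          apply Finset.one_lt_card.mp
          rw [Finset.card_erase_of_mem hx₂]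
          omega
        obtain ⟨hqx, hq2⟩ := Finset.mem_erase.mp hqe
        obtain ⟨hq'x, hq'2⟩ := Finset.mem_erase.mp hq'e
        have hq1 : q ∉ ℓ₁ := hnot21 q hq2 hqx
        have hq'1 : q' ∉ ℓ₁ := hnot21 q' hq'2 hq'x
        have hpq : p ≠ q := fun e => hq1 (e ▸ hp1)
        obtain ⟨m, ⟨hm, hpm, hqm⟩, -⟩ := hunique p (hsub ℓ₁ hℓ₁ hp1)
          q (hsub ℓ₂ hℓ₂ hq2) hpq
        -- m = {p, q}
        have hmpq : m = {p, q} := by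
          apply subset_antisymm
          · intro y hy
            rcases hcover y (hsub m hm hy) with hy1 | hy2
            · simp only [Finset.mem_insert, Finset.mem_singleton]
              left
              by_contra hyp
              exact hq1 ((huniq2 m hm ℓ₁ hℓ₁ y p hy hpm hy1 hp1 hyp) ▸ hqm)
            · simp only [Finset.mem_insert, Finset.mem_singleton]
              right
              by_contra hyq
              exact hp2 ((huniq2 m hm ℓ₂ hℓ₂ y q hy hqm hy2 hq2 hyq) ▸ hpm)
          · intro y hy
            rcases Finset.mem_insert.mp hy with h | h
            · exact h ▸ hpm
            · exact (Finset.mem_singleton.mp h) ▸ hqm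
        have hq'm : q' ∉ m := by
          rw [hmpq]
          simp only [Finset.mem_insert, Finset.mem_singleton]
          push_neg
          exact ⟨fun e => hq'1 (e ▸ hp1), hqq'.symm⟩
        have k1 := key q' (hsub ℓ₂ hℓ₂ hq'2) m hm hq'm
        have k2 := key q' (hsub ℓ₂ hℓ₂ hq'2) ℓ₁ hℓ₁ hq'1
        have hm2 : m.card = 2 := by
          rw [hmpq, Finset.card_insert_of_notMem (by simpa using hpq),
            Finset.card_singleton]
        omega
      -- N = ℓ₁ ∪ ℓ₂
      have hNeq : N = ℓ₁ ∪ ℓ₂ := by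
        apply subset_antisymm
        · intro q hq
          exact Finset.mem_union.mpr (hcover q hq)
        · exact Finset.union_subset (hsub ℓ₁ hℓ₁) (hsub ℓ₂ hℓ₂)
      have hvcard : N.card = ℓ₁.card + 1 := by
        have h1 := Finset.card_union_add_card_inter ℓ₁ ℓ₂
        rw [hint, Finset.card_singleton, ← hNeq] at h1
        omega
      refine ⟨ℓ₁, hℓ₁, by omega, ?_⟩
      intro m hm hmne
      by_cases hm2 : m = ℓ₂
      · exact hm2 ▸ h22
      · have hle : m.card ≤ 2 := by
          have hsub' : m ⊆ (m ∩ ℓ₁) ∪ (m ∩ ℓ₂) := by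
            intro y hy
            rcases hcover y (hsub m hm hy) with h | h
            · exact Finset.mem_union.mpr (Or.inl (Finset.mem_inter.mpr ⟨hy, h⟩))
            · exact Finset.mem_union.mpr (Or.inr (Finset.mem_inter.mpr ⟨hy, h⟩))
          have hc1 : (m ∩ ℓ₁).card ≤ 1 := by
            apply Finset.card_le_one.mpr
            intro a ha b hb'
            by_contra hab
            exact hmne (huniq2 m hm ℓ₁ hℓ₁ a b (Finset.mem_inter.mp ha).1
              (Finset.mem_inter.mp hb').1 (Finset.mem_inter.mp ha).2
              (Finset.mem_inter.mp hb').2 hab)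
          have hc2 : (m ∩ ℓ₂).card ≤ 1 := by
            apply Finset.card_le_one.mpr
            intro a ha b hb'
            by_contra hab
            exact hm2 (huniq2 m hm ℓ₂ hℓ₂ a b (Finset.mem_inter.mp ha).1
              (Finset.mem_inter.mp hb').1 (Finset.mem_inter.mp ha).2
              (Finset.mem_inter.mp hb').2 hab)
          calc m.card ≤ ((m ∩ ℓ₁) ∪ (m ∩ ℓ₂)).card := Finset.card_le_card hsub'
            _ ≤ (m ∩ ℓ₁).card + (m ∩ ℓ₂).card := Finset.card_union_le _ _
            _ ≤ 2 := by omega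
        have := hcard m hm
        omega
    have hnotB : ¬ (∃ k : ℕ, 2 ≤ k ∧ (∀ ℓ ∈ D, ℓ.card = k + 1) ∧
        ∀ p ∈ N, (D.filter (fun ℓ => p ∈ ℓ)).card = k + 1) := by
      rintro ⟨k, -, hksize, -⟩
      have := hksize m₁ hm₁
      have := hksize m₂ hm₂
      omega
    left
    rcases lt_or_gt_of_ne hnecard with h | h
    · exact ⟨main m₂ hm₂ m₁ hm₁ h, hnotB⟩
    · exact ⟨main m₁ hm₁ m₂ hm₂ h, hnotB⟩
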